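/- Let I be a countable set. Suppose f_N, f : I → ℝ satisfy f_N(i) → f(i) for every i ∈ I and sup_N Σ_{i∈I} |f_N(i)| < ∞; suppose u_N, v_N : I → [0,1] satisfy u_N(i) ≤ v_N(i) for all i and N, and u_N(i) → u(i) and v_N(i) → v(i) for every i ∈ I, where u, v : I → [0,1]; and suppose Σ_{i∈I} |f_N(i)v_N(i) − f(i)v(i)| → 0 as N → ∞. Then Σ_{i∈I} |f_N(i)u_N(i) − f(i)u(i)| → 0 as N → ∞. -/

import Mathlib

open Filter

/-- if `f N → f` pointwise with uniformly bounded ℓ¹ norms, `u N ≤ v N` are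
`[0,1]`-valued with `u N → u`, `v N → v` pointwise, and `f N * v N → f * v` in ℓ¹, then
`f N * u N → f * u` in ℓ¹. -/
theorem stmt_1 {I : Type*} [Countable I]
    (f : ℕ → I → ℝ) (flim : I → ℝ)
    (hfconv : ∀ i, Tendsto (fun N => f N i) atTop (nhds (flim i)))
    (hfl1 : ∀ N, Summable fun i => |f N i|)
    (hbdd : ∃ C : ℝ, ∀ N, ∑' i, |f N i| ≤ C)
    (u v : ℕ → I → ℝ) (ulim vlim : I → ℝ)
    (hu01 : ∀ N i, u N i ∈ Set.Icc (0 : ℝ) 1)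
    (hv01 : ∀ N i, v N i ∈ Set.Icc (0 : ℝ) 1)
    (hulim01 : ∀ i, ulim i ∈ Set.Icc (0 : ℝ) 1)
    (hvlim01 : ∀ i, vlim i ∈ Set.Icc (0 : ℝ) 1)
    (huv : ∀ N i, u N i ≤ v N i)
    (huconv : ∀ i, Tendsto (fun N => u N i) atTop (nhds (ulim i)))
    (hvconv : ∀ i, Tendsto (fun N => v N i) atTop (nhds (vlim i)))
    (hfv : Tendsto (fun N => ∑' i, |f N i * v N i - flim i * vlim i|) atTop (nhds 0)) :
    Tendsto (fun N => ∑' i, |f N i * u N i - flim i * ulim i|) atTop (nhds 0) := by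
  classical
  set A : ℕ → I → ℝ := fun N i => |f N i * u N i - flim i * ulim i| with hA
  set B : ℕ → I → ℝ := fun N i => |f N i * v N i - flim i * vlim i| with hB
  set g : I → ℝ := fun i => |flim i * vlim i| with hg
  -- summability of |flim|
  obtain ⟨C, hC⟩ := hbdd
  have hflim : Summable fun i => |flim i| := by
    refine summable_of_sum_le (c := C) (fun i => abs_nonneg _) (fun s => ?_)
    have h1 : Tendsto (fun N => ∑ i ∈ s, |f N i|) atTop (nhds (∑ i ∈ s, |flim i|)) :=
      tendsto_finset_sum _ fun i _ => (hfconv i).abs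
    refine le_of_tendsto h1 (Eventually.of_forall fun N => ?_)
    exact le_trans (Summable.sum_le_tsum s (fun i _ => abs_nonneg _) (hfl1 N)) (hC N)
  have hgsumm : Summable g := by
    refine hflim.of_nonneg_of_le (fun i => abs_nonneg _) (fun i => ?_)
    show |flim i * vlim i| ≤ |flim i|
    rw [abs_mul]
    nth_rewrite 2 [← mul_one |flim i|]
    exact mul_le_mul_of_nonneg_left (abs_le.2 ⟨by linarith [(hvlim01 i).1], (hvlim01 i).2⟩)
      (abs_nonneg _)
  -- summability of A N and B N
  have habs01 : ∀ (w : ℝ), w ∈ Set.Icc (0 : ℝ) 1 → |w| ≤ 1 := fun w hw =>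
    abs_le.2 ⟨by linarith [hw.1], hw.2⟩
  have hprod : ∀ (a w : ℝ), w ∈ Set.Icc (0 : ℝ) 1 → |a * w| ≤ |a| := fun a w hw => by
    rw [abs_mul]
    nth_rewrite 2 [← mul_one |a|]
    exact mul_le_mul_of_nonneg_left (habs01 w hw) (abs_nonneg _)
  have hAsumm : ∀ N, Summable (A N) := by
    intro N
    refine ((hfl1 N).add hflim).of_nonneg_of_le (fun i => abs_nonneg _) (fun i => ?_)
    calc A N i ≤ |f N i * u N i| + |flim i * ulim i| := abs_sub _ _
      _ ≤ |f N i| + |flim i| := add_le_add (hprod _ _ (hu01 N i)) (hprod _ _ (hulim01 i))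
  have hBsumm : ∀ N, Summable (B N) := by
    intro N
    refine ((hfl1 N).add hflim).of_nonneg_of_le (fun i => abs_nonneg _) (fun i => ?_)
    calc B N i ≤ |f N i * v N i| + |flim i * vlim i| := abs_sub _ _
      _ ≤ |f N i| + |flim i| := add_le_add (hprod _ _ (hv01 N i)) (hprod _ _ (hvlim01 i))
  -- ulim ≤ vlim
  have hulev : ∀ i, ulim i ≤ vlim i := fun i =>
    le_of_tendsto_of_tendsto' (huconv i) (hvconv i) (fun N => huv N i)
  -- key pointwise bound
  have key : ∀ N i, A N i ≤ B N i + 2 * g i := by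
    intro N i
    have h1 : |f N i * u N i| ≤ |f N i * v N i| := by
      rw [abs_mul, abs_mul]
      refine mul_le_mul_of_nonneg_left ?_ (abs_nonneg _)
      rw [abs_of_nonneg (hu01 N i).1, abs_of_nonneg ((hu01 N i).1.trans (huv N i))]
      exact huv N i
    have h2 : |flim i * ulim i| ≤ |flim i * vlim i| := by
      rw [abs_mul, abs_mul]
      refine mul_le_mul_of_nonneg_left ?_ (abs_nonneg _)
      rw [abs_of_nonneg (hulim01 i).1, abs_of_nonneg ((hulim01 i).1.trans (hulev i))]
      exact hulev i
    have h3 : |f N i * v N i| ≤ B N i + |flim i * vlim i| := by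
      calc |f N i * v N i| = |(f N i * v N i - flim i * vlim i) + flim i * vlim i| := by ring_nf
        _ ≤ B N i + |flim i * vlim i| := abs_add_le _ _
    calc A N i ≤ |f N i * u N i| + |flim i * ulim i| := abs_sub _ _
      _ ≤ |f N i * v N i| + |flim i * vlim i| := add_le_add h1 h2
      _ ≤ (B N i + |flim i * vlim i|) + |flim i * vlim i| := add_le_add_left h3 _
      _ = B N i + 2 * g i := by rw [hg]; ring
  -- main argument
  have hnon : ∀ N, 0 ≤ ∑' i, A N i := fun N => tsum_nonneg fun i => abs_nonneg _
  refine tendsto_order.2 ⟨fun a ha => Eventually.of_forall fun N => lt_of_lt_of_le ha (hnon N),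
    fun ε hε => ?_⟩
  have hε4 : (0:ℝ) < ε / 4 := by linarith
  -- choose a finite set with small tail of g
  obtain ⟨s, hs⟩ : ∃ s : Finset I, ∑' (i : {x // x ∉ s}), g i < ε / 4 :=
    ((tendsto_tsum_compl_atTop_zero g).eventually (gt_mem_nhds hε4)).exists
  -- finite part tends to 0
  have hfin : Tendsto (fun N => ∑ i ∈ s, A N i) atTop (nhds 0) := by
    have : ∀ i, Tendsto (fun N => A N i) atTop (nhds 0) := by
      intro i
      have h0 : Tendsto (fun N => f N i * u N i - flim i * ulim i) atTop (nhds 0) := by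
        have := ((hfconv i).mul (huconv i)).sub
          (tendsto_const_nhds (x := flim i * ulim i))
        simpa using this
      simpa using h0.abs
    have := tendsto_finset_sum s (fun i _ => this i)
    simpa using this
  have ev1 : ∀ᶠ N in atTop, ∑ i ∈ s, A N i < ε / 4 :=
    hfin.eventually (gt_mem_nhds hε4)
  have ev2 : ∀ᶠ N in atTop, ∑' i, B N i < ε / 4 :=
    hfv.eventually (gt_mem_nhds hε4)
  filter_upwards [ev1, ev2] with N h1 h2
  -- split the sum
  have hsplit : ∑' i, A N i = ∑ i ∈ s, A N i + ∑' (i : ↑(↑s : Set I)ᶜ), A N i :=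
    (Summable.sum_add_tsum_compl (hAsumm N)).symm
  -- tail bound
  have hAsub : Summable fun i : ↑(↑s : Set I)ᶜ => A N i := (hAsumm N).subtype _
  have hBsub : Summable fun i : ↑(↑s : Set I)ᶜ => B N i := (hBsumm N).subtype _
  have hgsub : Summable fun i : ↑(↑s : Set I)ᶜ => g i := hgsumm.subtype _
  have htail : ∑' (i : ↑(↑s : Set I)ᶜ), A N i ≤
      ∑' (i : ↑(↑s : Set I)ᶜ), B N i + 2 * ∑' (i : ↑(↑s : Set I)ᶜ), g i := by
    calc ∑' (i : ↑(↑s : Set I)ᶜ), A N i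
        ≤ ∑' (i : ↑(↑s : Set I)ᶜ), (B N i + 2 * g i) :=
          Summable.tsum_le_tsum (fun i => key N i) hAsub (hBsub.add (hgsub.mul_left 2))
      _ = ∑' (i : ↑(↑s : Set I)ᶜ), B N i + ∑' (i : ↑(↑s : Set I)ᶜ), 2 * g i :=
          Summable.tsum_add hBsub (hgsub.mul_left 2)
      _ = ∑' (i : ↑(↑s : Set I)ᶜ), B N i + 2 * ∑' (i : ↑(↑s : Set I)ᶜ), g i := by
          rw [tsum_mul_left]
  have hBtail : ∑' (i : ↑(↑s : Set I)ᶜ), B N i ≤ ∑' i, B N i :=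
    Summable.tsum_le_tsum_of_inj Subtype.val Subtype.val_injective
      (fun c _ => abs_nonneg _) (fun b => le_refl _) hBsub (hBsumm N)
  have hgtail : ∑' (i : ↑(↑s : Set I)ᶜ), g i < ε / 4 := hs
  calc ∑' i, A N i = ∑ i ∈ s, A N i + ∑' (i : ↑(↑s : Set I)ᶜ), A N i := hsplit
    _ ≤ ∑ i ∈ s, A N i + (∑' (i : ↑(↑s : Set I)ᶜ), B N i + 2 * ∑' (i : ↑(↑s : Set I)ᶜ), g i) :=
        add_le_add_right htail _
    _ ≤ ∑ i ∈ s, A N i + (∑' i, B N i + 2 * ∑' (i : ↑(↑s : Set I)ᶜ), g i) := by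
        gcongr
    _ < ε / 4 + (ε / 4 + 2 * (ε / 4)) := by
        have hg0 : (0:ℝ) ≤ 2 := by norm_num
        gcongr
    _ = ε := by ring
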